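/- For every n ≥ 1, the sequence repeating (e_1, e_2, e_3) n times is the unique nonempty 3-dimensional balanced ballot path of length 3n whose semisymmetric height is at most 3 (equivalently, at most 2). -/

import Mathlib

open scoped Classical

/-- Number of steps among the first `i` steps of `P` equal to basis vector `j`. -/
def cnt (k n : ℕ) (P : Fin (k*n) → Fin k) (j : Fin k) (i : ℕ) : ℕ :=
  (Finset.univ.filter (fun t : Fin (k*n) => (t : ℕ) < i ∧ P t = j)).card

/-- `P` is a `k`-dimensional balanced ballot path of length `k*n`:
each basis vector appears exactly `n` times, and every partial sum is
weakly decreasing in coordinates. -/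
def IsBBP (k n : ℕ) (P : Fin (k*n) → Fin k) : Prop :=
  (∀ j : Fin k, cnt k n P j (k*n) = n) ∧
  (∀ i ≤ k*n, ∀ j j' : Fin k, j ≤ j' → cnt k n P j' i ≤ cnt k n P j i)

/-- Semisymmetric height `g_k` of the `i`-th intermediate point of `P`. -/
def ptHt (k n : ℕ) (P : Fin (k*n) → Fin k) (i : ℕ) : ℤ :=
  ∑ j : Fin k, ((k : ℤ) - 1 - 2*(j : ℕ)) * (cnt k n P j i)

/-- The semisymmetric height of path `P` is at most `u`. -/
def HeightLE (k n : ℕ) (P : Fin (k*n) → Fin k) (u : ℤ) : Prop :=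
  ∀ i ≤ k*n, ptHt k n P i ≤ u

/-- The semisymmetric height of path `P` is exactly `u`. -/
def HeightEq (k n : ℕ) (P : Fin (k*n) → Fin k) (u : ℤ) : Prop :=
  HeightLE k n P u ∧ ∃ i ≤ k*n, ptHt k n P i = u

lemma cnt_card_sum (k n : ℕ) (P : Fin (k*n) → Fin k) (j : Fin k) (i : ℕ) :
    cnt k n P j i = ∑ t : Fin (k*n), if ((t:ℕ) < i ∧ P t = j) then 1 else 0 := by
  classical
  unfold cnt
  rw [Finset.card_filter]

lemma cnt_zero (k n : ℕ) (P : Fin (k*n) → Fin k) (j : Fin k) :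
    cnt k n P j 0 = 0 := by
  simp [cnt]

lemma cnt_succ (k n : ℕ) (P : Fin (k*n) → Fin k) (j : Fin k) (i : ℕ) (hi : i < k*n) :
    cnt k n P j (i+1) = cnt k n P j i + (if P ⟨i, hi⟩ = j then 1 else 0) := by
  classical
  rw [cnt_card_sum, cnt_card_sum]
  have h : ∀ t : Fin (k*n),
      (if ((t:ℕ) < i+1 ∧ P t = j) then (1:ℕ) else 0)
      = (if ((t:ℕ) < i ∧ P t = j) then 1 else 0)
        + (if (t = ⟨i, hi⟩ ∧ P t = j) then 1 else 0) := by
    intro t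
    by_cases hp : P t = j
    · by_cases ht : t = ⟨i, hi⟩
      · subst ht; simp [hp]
      · have htv : (t:ℕ) ≠ i := fun h => ht (Fin.ext h)
        simp only [hp, and_true, ht, if_false]
        split_ifs <;> omega
    · simp [hp]
  rw [Finset.sum_congr rfl (fun t _ => h t), Finset.sum_add_distrib]
  congr 1
  have h2 : ∀ t : Fin (k*n),
      (if (t = ⟨i, hi⟩ ∧ P t = j) then (1:ℕ) else 0)
      = if t = ⟨i, hi⟩ then (if P ⟨i, hi⟩ = j then 1 else 0) else 0 := by
    intro t
    by_cases ht : t = ⟨i, hi⟩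
    · subst ht; simp
    · simp [ht]
  rw [Finset.sum_congr rfl (fun t _ => h2 t), Finset.sum_ite_eq' Finset.univ]
  simp

lemma ptHt3 (n : ℕ) (P : Fin (3*n) → Fin 3) (i : ℕ) :
    ptHt 3 n P i = 2*(cnt 3 n P 0 i : ℤ) - 2*(cnt 3 n P 2 i) := by
  unfold ptHt
  rw [Fin.sum_univ_three]
  norm_num
  ring

lemma sum_cnt3 (n : ℕ) (P : Fin (3*n) → Fin 3) :
    ∀ i ≤ 3*n, cnt 3 n P 0 i + cnt 3 n P 1 i + cnt 3 n P 2 i = i := by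
  intro i
  induction i with
  | zero => intro _; simp [cnt_zero]
  | succ i ih =>
    intro h
    have hi : i < 3*n := by omega
    have h0 := cnt_succ 3 n P 0 i hi
    have h1 := cnt_succ 3 n P 1 i hi
    have h2 := cnt_succ 3 n P 2 i hi
    have hite : (if P ⟨i,hi⟩ = 0 then (1:ℕ) else 0) + (if P ⟨i,hi⟩ = 1 then 1 else 0)
        + (if P ⟨i,hi⟩ = 2 then 1 else 0) = 1 := by
      rcases hq : P ⟨i,hi⟩ with ⟨v, hv⟩
      interval_cases v <;> simp [Fin.ext_iff]
    have hih := ih (by omega)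
    omega

lemma cnt_canon (n : ℕ) :
    ∀ i ≤ 3*n, cnt 3 n (fun t : Fin (3*n) => (⟨(t:ℕ) % 3, Nat.mod_lt _ (by norm_num)⟩ : Fin 3)) 0 i = (i+2)/3
      ∧ cnt 3 n (fun t : Fin (3*n) => (⟨(t:ℕ) % 3, Nat.mod_lt _ (by norm_num)⟩ : Fin 3)) 1 i = (i+1)/3
      ∧ cnt 3 n (fun t : Fin (3*n) => (⟨(t:ℕ) % 3, Nat.mod_lt _ (by norm_num)⟩ : Fin 3)) 2 i = i/3 := by
  intro i
  induction i with
  | zero => intro _; simp [cnt_zero]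
  | succ i ih =>
    intro h
    have hi : i < 3*n := by omega
    obtain ⟨e0, e1, e2⟩ := ih (by omega)
    have h0 := cnt_succ 3 n (fun t : Fin (3*n) => (⟨(t:ℕ) % 3, Nat.mod_lt _ (by norm_num)⟩ : Fin 3)) 0 i hi
    have h1 := cnt_succ 3 n (fun t : Fin (3*n) => (⟨(t:ℕ) % 3, Nat.mod_lt _ (by norm_num)⟩ : Fin 3)) 1 i hi
    have h2 := cnt_succ 3 n (fun t : Fin (3*n) => (⟨(t:ℕ) % 3, Nat.mod_lt _ (by norm_num)⟩ : Fin 3)) 2 i hi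
    simp only [Fin.ext_iff] at h0 h1 h2
    norm_num at h0 h1 h2
    refine ⟨?_, ?_, ?_⟩
    · rw [h0, e0]; split_ifs with hm <;> omega
    · rw [h1, e1]; split_ifs with hm <;> omega
    · rw [h2, e2]; split_ifs with hm <;> omega

theorem stmt6 (n : ℕ) (hn : 1 ≤ n) (P : Fin (3*n) → Fin 3) (hP : IsBBP 3 n P) :
    HeightLE 3 n P 3 ↔ P = fun t => ⟨(t : ℕ) % 3, by omega⟩ := by
  constructor
  · intro hle
    have key : ∀ i ≤ 3*n, cnt 3 n P 0 i = (i+2)/3 ∧ cnt 3 n P 1 i = (i+1)/3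
        ∧ cnt 3 n P 2 i = i/3 := by
      intro i hi
      have hs := sum_cnt3 n P i hi
      have h10 : cnt 3 n P 1 i ≤ cnt 3 n P 0 i := hP.2 i hi 0 1 (by decide)
      have h21 : cnt 3 n P 2 i ≤ cnt 3 n P 1 i := hP.2 i hi 1 2 (by decide)
      have hh := hle i hi
      rw [ptHt3] at hh
      omega
    funext t
    have hi : (t:ℕ) < 3*n := t.isLt
    have hi1 : (t:ℕ) + 1 ≤ 3*n := hi
    obtain ⟨a0, a1, a2⟩ := key (t:ℕ) (by omega)
    obtain ⟨b0, b1, b2⟩ := key ((t:ℕ)+1) hi1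
    have h0 := cnt_succ 3 n P 0 (t:ℕ) hi
    have h1 := cnt_succ 3 n P 1 (t:ℕ) hi
    have h2 := cnt_succ 3 n P 2 (t:ℕ) hi
    simp only [Fin.eta] at h0 h1 h2
    rcases hq : P t with ⟨v, hv⟩
    rw [hq] at h0 h1 h2
    interval_cases v
    · simp [Fin.ext_iff] at h0
      apply Fin.ext
      simp
      omega
    · simp [Fin.ext_iff] at h1
      apply Fin.ext
      simp
      omega
    · simp [Fin.ext_iff] at h2
      apply Fin.ext
      simp
      omega
  · intro h
    subst h
    intro i hi
    rw [ptHt3]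
    obtain ⟨e0, _, e2⟩ := cnt_canon n i hi
    rw [e0, e2]
    omega
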